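/- For all real ξ₁, ξ₂ and natural number m: ∫_{-∞}^{+∞} e^{-η²} H_m(η+ξ₁) H_m(η+ξ₂) dη = 2^m m! √π L_m(-2ξ₁ξ₂), where H_m is the m-th (physicists') Hermite polynomial and L_m the m-th Laguerre polynomial. -/

import Mathlib

open MeasureTheory

open Filter Polynomial

/-- The physicists' Hermite polynomials, via the standard recurrence
H₀ = 1, H₁(x) = 2x, H_{n+2}(x) = 2x H_{n+1}(x) - 2(n+1) H_n(x). -/
noncomputable def hermiteP : ℕ → ℝ → ℝ
  | 0, _ => 1
  | 1, x => 2 * x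
  | (n + 2), x => 2 * x * hermiteP (n + 1) x - 2 * (n + 1) * hermiteP n x

noncomputable def Hpoly : ℕ → Polynomial ℝ
  | 0 => 1
  | 1 => 2 * X
  | (n + 2) => 2 * X * Hpoly (n + 1) - C (2 * (n + 1) : ℝ) * Hpoly n

lemma hermiteP_add_two (n : ℕ) (x : ℝ) :
    hermiteP (n+2) x = 2 * x * hermiteP (n + 1) x - 2 * (n + 1) * hermiteP n x := rfl

lemma Hpoly_add_two (n : ℕ) :
    Hpoly (n+2) = 2 * X * Hpoly (n + 1) - C (2 * (n + 1) : ℝ) * Hpoly n := rfl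

lemma Hpoly_eval : ∀ (n : ℕ) (x : ℝ), (Hpoly n).eval x = hermiteP n x
  | 0, x => by simp [Hpoly, hermiteP]
  | 1, x => by simp [Hpoly, hermiteP]
  | (n+2), x => by
      rw [Hpoly_add_two, hermiteP_add_two]
      simp only [eval_sub, eval_mul, eval_ofNat, eval_X, eval_C, Hpoly_eval (n+1) x,
        Hpoly_eval n x]

lemma Hpoly_derivative : ∀ n : ℕ, (Hpoly (n+1)).derivative = C ((2:ℝ) * (n+1)) * Hpoly n
  | 0 => by
      show derivative (2 * X : Polynomial ℝ) = _
      simp only [Hpoly, derivative_mul, derivative_ofNat, derivative_X, Nat.cast_zero]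
      simp only [map_mul, map_ofNat, map_one, map_add, map_zero]
      ring
  | 1 => by
      rw [show (1+1 : ℕ) = 0+2 from rfl, Hpoly_add_two]
      simp [Hpoly, derivative_mul]
      simp only [map_mul, map_ofNat, map_one, map_add, map_zero]
      ring
  | (n+2) => by
      have ih1 := Hpoly_derivative (n+1)
      have ih0 := Hpoly_derivative n
      rw [show (n+2+1 : ℕ) = (n+1)+2 from rfl, Hpoly_add_two (n+1)]
      simp only [derivative_sub, derivative_mul]
      rw [ih1, ih0]
      rw [show (n+1+1 : ℕ) = n+2 from rfl, Hpoly_add_two n]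
      push_cast
      simp only [derivative_mul, derivative_ofNat, derivative_X, derivative_C, derivative_natCast, derivative_one,
        map_mul, map_ofNat, map_one, map_add, Polynomial.C_eq_natCast]
      ring

lemma integrable_xpow_gaussian (n : ℕ) :
    Integrable fun x : ℝ => x ^ n * Real.exp (-x ^ 2) := by
  have h := integrable_rpow_mul_exp_neg_mul_sq (b := 1) one_pos
    (s := (n : ℝ)) (lt_of_lt_of_le neg_one_lt_zero (Nat.cast_nonneg n))
  simpa [Real.rpow_natCast, neg_mul, one_mul] using h

lemma integrable_poly_gaussian (p : Polynomial ℝ) :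
    Integrable fun x : ℝ => Real.exp (-x ^ 2) * p.eval x := by
  induction p using Polynomial.induction_on' with
  | add p q hp hq => simp only [eval_add, mul_add]; exact hp.add hq
  | monomial n a =>
      simpa [eval_monomial, mul_comm, mul_assoc, mul_left_comm] using
        ((integrable_xpow_gaussian n).const_mul a)

lemma tendsto_xpow_gaussian_atTop (n : ℕ) :
    Tendsto (fun x : ℝ => x ^ n * Real.exp (-x ^ 2)) atTop (nhds 0) := by
  have h := rpow_mul_exp_neg_mul_sq_isLittleO_exp_neg (b := 1) one_pos (n : ℝ)
  have h2 : (fun x : ℝ => x ^ n * Real.exp (-x ^ 2)) =o[atTop]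
      fun x : ℝ => Real.exp (-(2⁻¹ * x)) := by
    simpa [Real.rpow_natCast, neg_mul, one_mul] using h
  have h3 : Tendsto (fun x : ℝ => Real.exp (-(2⁻¹ * x))) atTop (nhds 0) :=
    Real.tendsto_exp_neg_atTop_nhds_zero.comp
      (Tendsto.const_mul_atTop (by norm_num : (0:ℝ) < 2⁻¹) tendsto_id)
  exact h2.isBigO.trans_tendsto h3

lemma tendsto_poly_gaussian_atTop (p : Polynomial ℝ) :
    Tendsto (fun x : ℝ => Real.exp (-x ^ 2) * p.eval x) atTop (nhds 0) := by
  induction p using Polynomial.induction_on' with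
  | add p q hp hq => simpa [mul_add] using hp.add hq
  | monomial n a =>
      have := (tendsto_xpow_gaussian_atTop n).const_mul a
      simp only [mul_zero] at this
      refine this.congr (fun x => ?_)
      simp [eval_monomial]; ring

lemma tendsto_poly_gaussian_atBot (p : Polynomial ℝ) :
    Tendsto (fun x : ℝ => Real.exp (-x ^ 2) * p.eval x) atBot (nhds 0) := by
  have h := tendsto_poly_gaussian_atTop (p.comp (-X))
  have h2 := h.comp tendsto_neg_atBot_atTop
  refine h2.congr (fun x => ?_)
  simp [Function.comp, eval_comp]

lemma hasDerivAt_gaussian_poly (p : Polynomial ℝ) (x : ℝ) :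
    HasDerivAt (fun x : ℝ => Real.exp (-x ^ 2) * p.eval x)
      (Real.exp (-x ^ 2) * ((p.derivative - 2 * X * p).eval x)) x := by
  have hexp : HasDerivAt (fun x : ℝ => Real.exp (-x ^ 2))
      (Real.exp (-x ^ 2) * (-(2 * x))) x := by
    have h1 : HasDerivAt (fun x : ℝ => -x ^ 2) (-(2 * x)) x := by
      exact (hasDerivAt_pow 2 x).neg.congr_deriv (by norm_num)
    exact (Real.hasDerivAt_exp (-x ^ 2)).comp x h1
  have := hexp.mul (p.hasDerivAt x)
  refine this.congr_deriv ?_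
  simp [eval_mul, eval_sub]
  ring

lemma parts (p : Polynomial ℝ) :
    ∫ x : ℝ, Real.exp (-x ^ 2) * (2 * x * p.eval x) =
      ∫ x : ℝ, Real.exp (-x ^ 2) * p.derivative.eval x := by
  set f : ℝ → ℝ := fun x => Real.exp (-x ^ 2) * p.eval x with hf
  set g : ℝ → ℝ := fun x => Real.exp (-x ^ 2) * ((p.derivative - 2 * X * p).eval x) with hg
  have hderiv : ∀ x : ℝ, HasDerivAt f (g x) x := hasDerivAt_gaussian_poly p
  have hgint : Integrable g := integrable_poly_gaussian _
  have h1 : ∫ x in Set.Ioi (0:ℝ), g x = 0 - f 0 :=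
    integral_Ioi_of_hasDerivAt_of_tendsto
      (hderiv 0).continuousAt.continuousWithinAt
      (fun x _ => hderiv x) hgint.integrableOn (tendsto_poly_gaussian_atTop p)
  have h2 : ∫ x in Set.Iic (0:ℝ), g x = f 0 - 0 :=
    integral_Iic_of_hasDerivAt_of_tendsto
      (hderiv 0).continuousAt.continuousWithinAt
      (fun x _ => hderiv x) hgint.integrableOn (tendsto_poly_gaussian_atBot p)
  have h3 : ∫ x : ℝ, g x = 0 := by
    rw [← intervalIntegral.integral_Iic_add_Ioi (b := (0:ℝ)) hgint.integrableOn hgint.integrableOn, h1, h2]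
    ring
  have h4 : ∀ x : ℝ, g x = Real.exp (-x ^ 2) * p.derivative.eval x
      - Real.exp (-x ^ 2) * (2 * x * p.eval x) := by
    intro x; simp [hg, eval_sub, eval_mul]; ring
  rw [show (fun x : ℝ => g x) = fun x => Real.exp (-x ^ 2) * p.derivative.eval x
      - Real.exp (-x ^ 2) * (2 * x * p.eval x) from funext h4] at h3
  have hi1 : Integrable fun x : ℝ => Real.exp (-x ^ 2) * p.derivative.eval x :=
    integrable_poly_gaussian _
  have hi2 : Integrable fun x : ℝ => Real.exp (-x ^ 2) * (2 * x * p.eval x) := by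
    have := integrable_poly_gaussian (2 * X * p)
    refine this.congr (Eventually.of_forall fun x => ?_)
    simp [eval_mul]
  rw [integral_sub hi1 hi2] at h3
  linarith

lemma shift_eval (p : Polynomial ℝ) (ξ x : ℝ) :
    (p.comp (X + C ξ)).eval x = p.eval (x + ξ) := by simp [eval_comp]

lemma shift_derivative (p : Polynomial ℝ) (ξ : ℝ) :
    (p.comp (X + C ξ)).derivative = p.derivative.comp (X + C ξ) := by
  simp [derivative_comp]

lemma integrable_pg (f : ℝ → ℝ) (p : Polynomial ℝ)
    (h : ∀ x, f x = Real.exp (-x ^ 2) * p.eval x) : Integrable f :=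
  (integrable_poly_gaussian p).congr (Eventually.of_forall fun x => (h x).symm)

lemma hermiteP_succ (k : ℕ) (x : ℝ) :
    hermiteP (k+1) x = 2 * x * hermiteP k x - ((Hpoly k).derivative).eval x := by
  cases k with
  | zero => simp [hermiteP, Hpoly]
  | succ j =>
      rw [hermiteP_add_two, Hpoly_derivative j]
      simp only [eval_mul, eval_C, Hpoly_eval]

lemma intC : ∀ (k : ℕ) (ξ : ℝ),
    ∫ x : ℝ, Real.exp (-x ^ 2) * hermiteP k (x + ξ) = Real.sqrt Real.pi * (2 * ξ) ^ k := by
  intro k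
  induction k with
  | zero =>
      intro ξ
      have := integral_gaussian 1
      simpa [hermiteP] using this
  | succ k ih =>
      intro ξ
      set q : Polynomial ℝ := (Hpoly k).comp (X + C ξ) with hq
      have key : ∀ x : ℝ, Real.exp (-x ^ 2) * hermiteP (k+1) (x+ξ) =
          (Real.exp (-x ^ 2) * (2 * x * q.eval x)
          + 2 * ξ * (Real.exp (-x ^ 2) * hermiteP k (x+ξ)))
          - Real.exp (-x ^ 2) * (q.derivative.eval x) := by
        intro x
        rw [hermiteP_succ k (x+ξ), hq, shift_derivative, shift_eval, shift_eval, Hpoly_eval]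
        ring
      have hA : Integrable fun x : ℝ => Real.exp (-x ^ 2) * (2 * x * q.eval x) :=
        integrable_pg _ (2 * X * q) (fun x => by simp)
      have hB : Integrable fun x : ℝ => 2 * ξ * (Real.exp (-x ^ 2) * hermiteP k (x+ξ)) := by
        refine ((integrable_pg (fun x => Real.exp (-x ^ 2) * hermiteP k (x+ξ)) q
          (fun x => by rw [hq, shift_eval, Hpoly_eval])).const_mul _)
      have hC : Integrable fun x : ℝ => Real.exp (-x ^ 2) * (q.derivative.eval x) :=
        integrable_pg _ q.derivative (fun x => rfl)
      have hAB : Integrable fun x : ℝ => Real.exp (-x ^ 2) * (2 * x * q.eval x)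
          + 2 * ξ * (Real.exp (-x ^ 2) * hermiteP k (x+ξ)) := hA.add hB
      rw [show (fun x : ℝ => Real.exp (-x ^ 2) * hermiteP (k+1) (x+ξ)) = _ from funext key]
      rw [integral_sub hAB hC, integral_add hA hB, integral_const_mul, parts q, ih]
      ring

lemma intB : ∀ (j k : ℕ) (ξ : ℝ), j ≤ k →
    ∫ x : ℝ, Real.exp (-x ^ 2) * (hermiteP j x * hermiteP k (x + ξ)) =
      Real.sqrt Real.pi * 2 ^ j * (k.descFactorial j : ℝ) * (2 * ξ) ^ (k - j) := by
  intro j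
  induction j with
  | zero =>
      intro k ξ _
      simp only [hermiteP, one_mul, pow_zero, Nat.descFactorial_zero, Nat.cast_one, Nat.sub_zero]
      rw [intC k ξ]; ring
  | succ j ih =>
      intro k ξ hjk
      cases k with
      | zero => omega
      | succ k' =>
          have hjk' : j ≤ k' := by omega
          set P : Polynomial ℝ := Hpoly j * ((Hpoly (k'+1)).comp (X + C ξ)) with hP
          have key : ∀ x : ℝ, Real.exp (-x ^ 2) * (hermiteP (j+1) x * hermiteP (k'+1) (x+ξ)) =
              Real.exp (-x ^ 2) * (2 * x * P.eval x)
              - Real.exp (-x ^ 2) * (((Hpoly j).derivative).eval x * hermiteP (k'+1) (x+ξ)) := by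
            intro x
            rw [hermiteP_succ j x, hP]
            simp only [eval_mul, shift_eval, Hpoly_eval]
            ring
          have hA : Integrable fun x : ℝ => Real.exp (-x ^ 2) * (2 * x * P.eval x) :=
            integrable_pg _ (2 * X * P) (fun x => by simp)
          have hB : Integrable fun x : ℝ =>
              Real.exp (-x ^ 2) * (((Hpoly j).derivative).eval x * hermiteP (k'+1) (x+ξ)) :=
            integrable_pg _ ((Hpoly j).derivative * ((Hpoly (k'+1)).comp (X + C ξ)))
              (fun x => by simp [eval_mul, shift_eval, Hpoly_eval])
          rw [show (fun x : ℝ => Real.exp (-x ^ 2) * (hermiteP (j+1) x * hermiteP (k'+1) (x+ξ)))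
            = _ from funext key]
          rw [integral_sub hA hB, parts P]
          have hPd : ∀ x : ℝ, Real.exp (-x ^ 2) * (P.derivative.eval x) =
              Real.exp (-x ^ 2) * (((Hpoly j).derivative).eval x * hermiteP (k'+1) (x+ξ))
              + 2 * (k'+1) * (Real.exp (-x ^ 2) * (hermiteP j x * hermiteP k' (x+ξ))) := by
            intro x
            rw [hP, derivative_mul, shift_derivative, Hpoly_derivative k']
            simp only [eval_add, eval_mul, shift_eval, eval_C, Hpoly_eval, eval_comp, eval_X]
            ring
          have hD : Integrable fun x : ℝ =>
              2 * ((k':ℝ)+1) * (Real.exp (-x ^ 2) * (hermiteP j x * hermiteP k' (x+ξ))) :=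
            (integrable_pg _ (Hpoly j * ((Hpoly k').comp (X + C ξ)))
              (fun x => by simp [eval_mul, shift_eval, Hpoly_eval])).const_mul _
          rw [show (fun x : ℝ => Real.exp (-x ^ 2) * (P.derivative.eval x)) = _ from funext hPd]
          rw [integral_add hB hD, integral_const_mul, ih k' ξ hjk']
          have hdesc : ((k'+1).descFactorial (j+1) : ℝ) = (k'+1) * (k'.descFactorial j : ℝ) := by
            rw [Nat.succ_descFactorial_succ]; push_cast; ring
          have hsub : k' + 1 - (j + 1) = k' - j := by omega
          rw [hsub, hdesc]
          ring

lemma twoMul (j : ℕ) (x : ℝ) :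
    2 * x * hermiteP j x = hermiteP (j+1) x + 2 * (j:ℝ) * hermiteP (j-1) x := by
  cases j with
  | zero => simp [hermiteP]
  | succ i =>
      rw [show i+1+1 = i+2 from rfl, hermiteP_add_two]
      push_cast
      try simp only [Nat.add_sub_cancel]
      try ring

lemma addF : ∀ (m : ℕ) (x y : ℝ), hermiteP m (x + y) =
    ∑ j ∈ Finset.range (m+1), (m.choose j : ℝ) * hermiteP j x * (2*y)^(m-j)
  | 0, x, y => by simp [hermiteP]
  | 1, x, y => by
      simp [hermiteP, Finset.sum_range_succ]
      ring
  | (m+2), x, y => by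
      have ih1 := addF (m+1) x y
      have ih0 := addF m x y
      rw [hermiteP_add_two, ih1, ih0]
      set w : ℝ := 2*y with hw
      set S1 : ℝ := ∑ j ∈ Finset.range (m+2), ((m+1).choose j : ℝ) * hermiteP j x * w^(m+1-j)
        with hS1
      set S0 : ℝ := ∑ j ∈ Finset.range (m+1), (m.choose j : ℝ) * hermiteP j x * w^(m-j)
        with hS0
      set A1 : ℝ := ∑ j ∈ Finset.range (m+2), ((m+1).choose j : ℝ) * hermiteP (j+1) x
        * w^(m+1-j) with hA1
      have h2x : 2*x*S1 = A1
          + ∑ j ∈ Finset.range (m+2), ((m+1).choose j : ℝ) * (2*(j:ℝ)) * hermiteP (j-1) x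
            * w^(m+1-j) := by
        rw [hS1, hA1, Finset.mul_sum, ← Finset.sum_add_distrib]
        refine Finset.sum_congr rfl fun j _ => ?_
        have ht := twoMul j x
        calc 2*x*(((m+1).choose j : ℝ) * hermiteP j x * w^(m+1-j))
            = (2*x*hermiteP j x) * (((m+1).choose j : ℝ) * w^(m+1-j)) := by ring
          _ = _ := by rw [ht]; ring
      have hA2 : (∑ j ∈ Finset.range (m+2), ((m+1).choose j : ℝ) * (2*(j:ℝ))
            * hermiteP (j-1) x * w^(m+1-j)) = 2*((m:ℝ)+1) * S0 := by
        rw [Finset.sum_range_succ']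
        simp only [Nat.cast_zero, mul_zero, zero_mul, mul_zero, add_zero]
        rw [hS0, Finset.mul_sum]
        refine Finset.sum_congr rfl fun i _ => ?_
        have hc : ((m+1).choose (i+1) : ℝ) * ((i:ℝ)+1) = ((m:ℝ)+1) * (m.choose i : ℝ) := by
          have := Nat.add_one_mul_choose_eq m i
          have h2 : ((m+1) * m.choose i : ℕ) = ((m+1).choose (i+1) * (i+1) : ℕ) := this
          have h3 : ((m:ℝ)+1) * (m.choose i : ℝ) = ((m+1).choose (i+1) : ℝ) * ((i:ℝ)+1) := by
            exact_mod_cast congrArg (Nat.cast : ℕ → ℝ) h2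
          linarith [h3]
        have hsub : m+1-(i+1) = m-i := by omega
        have hsub2 : i+1-1 = i := by omega
        rw [hsub, hsub2]
        push_cast
        linear_combination (2 * hermiteP i x * w^(m-i)) * hc
      have h2y : 2*y*S1 = ∑ j ∈ Finset.range (m+2), ((m+1).choose j : ℝ) * hermiteP j x
          * w^(m+2-j) := by
        rw [hS1, Finset.mul_sum]
        refine Finset.sum_congr rfl fun j hj => ?_
        have hj' : j < m+2 := Finset.mem_range.mp hj
        have : m+2-j = (m+1-j)+1 := by omega
        rw [this, pow_succ, hw]
        ring
      have hS2 : ∑ j ∈ Finset.range (m+3), ((m+2).choose j : ℝ) * hermiteP j x * w^(m+2-j)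
          = A1 + 2*y*S1 := by
        rw [Finset.sum_range_succ', h2y, hA1]
        have hstep : ∀ i ∈ Finset.range (m+2),
            ((m+2).choose (i+1) : ℝ) * hermiteP (i+1) x * w^(m+2-(i+1))
            = ((m+1).choose i : ℝ) * hermiteP (i+1) x * w^(m+1-i)
              + ((m+1).choose (i+1) : ℝ) * hermiteP (i+1) x * w^(m+1-i) := by
          intro i _
          have hc : ((m+2).choose (i+1) : ℝ)
              = ((m+1).choose i : ℝ) + ((m+1).choose (i+1) : ℝ) := by
            exact_mod_cast congrArg (Nat.cast : ℕ → ℝ) (Nat.choose_succ_succ (m+1) i)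
          have hsub : m+2-(i+1) = m+1-i := by omega
          rw [hsub, hc]
          ring
        rw [Finset.sum_congr rfl hstep, Finset.sum_add_distrib]
        have hM : (∑ i ∈ Finset.range (m+2), ((m+1).choose (i+1) : ℝ) * hermiteP (i+1) x
              * w^(m+1-i))
            = ∑ i ∈ Finset.range (m+1), ((m+1).choose (i+1) : ℝ) * hermiteP (i+1) x
              * w^(m+1-i) := by
          rw [Finset.sum_range_succ]
          have : ((m+1).choose (m+2) : ℝ) = 0 := by
            rw [Nat.choose_eq_zero_of_lt (by omega)]
            simp
          rw [this]
          ring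
        have hB' : (∑ j ∈ Finset.range (m+2), ((m+1).choose j : ℝ) * hermiteP j x * w^(m+2-j))
            = (∑ i ∈ Finset.range (m+1), ((m+1).choose (i+1) : ℝ) * hermiteP (i+1) x
              * w^(m+1-i)) + ((m+2).choose 0 : ℝ) * hermiteP 0 x * w^(m+2-0) := by
          rw [Finset.sum_range_succ']
          congr 1
          · refine Finset.sum_congr rfl fun i _ => ?_
            have hsub : m+2-(i+1) = m+1-i := by omega
            rw [hsub]
          all_goals simp [hermiteP]
        rw [hM, hB']
        ring
      rw [hS2]
      push_cast
      push_cast at h2x hA2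
      linear_combination h2x + hA2

/-- The n-th Laguerre polynomial L_n(x) = Σ_{k=0}^n (n choose k) (-x)^k / k!. -/
noncomputable def laguerre (n : ℕ) (x : ℝ) : ℝ :=
  ∑ k ∈ Finset.range (n + 1), (n.choose k : ℝ) * (-x) ^ k / (Nat.factorial k : ℝ)

/-- ∫_{-∞}^{∞} e^{-η²} H_m(η+ξ₁) H_m(η+ξ₂) dη
= 2^m m! √π L_m(-2ξ₁ξ₂). -/
theorem stmt_12 (m : ℕ) (ξ₁ ξ₂ : ℝ) :
    ∫ η : ℝ, Real.exp (-η ^ 2) * hermiteP m (η + ξ₁) * hermiteP m (η + ξ₂) =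
      2 ^ m * (Nat.factorial m : ℝ) * Real.sqrt Real.pi * laguerre m (-2 * ξ₁ * ξ₂) := by
  have key : ∀ η : ℝ, Real.exp (-η ^ 2) * hermiteP m (η + ξ₁) * hermiteP m (η + ξ₂)
      = ∑ j ∈ Finset.range (m+1), (m.choose j : ℝ) * (2*ξ₁)^(m-j)
        * (Real.exp (-η ^ 2) * (hermiteP j η * hermiteP m (η + ξ₂))) := by
    intro η
    rw [addF m η ξ₁, Finset.mul_sum, Finset.sum_mul]
    refine Finset.sum_congr rfl fun j _ => ?_
    ring
  rw [show (fun η : ℝ => Real.exp (-η ^ 2) * hermiteP m (η + ξ₁) * hermiteP m (η + ξ₂))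
    = _ from funext key]
  rw [integral_finset_sum _ (fun j _ => ((integrable_pg _
    (Hpoly j * ((Hpoly m).comp (X + C ξ₂)))
    (fun x => by simp [eval_mul, shift_eval, Hpoly_eval])).const_mul _))]
  simp only [integral_const_mul]
  have step : ∀ j ∈ Finset.range (m+1),
      (m.choose j : ℝ) * (2*ξ₁)^(m-j)
        * ∫ x : ℝ, Real.exp (-x ^ 2) * (hermiteP j x * hermiteP m (x + ξ₂))
      = (m.choose j : ℝ) * (2*ξ₁)^(m-j)
        * (Real.sqrt Real.pi * 2 ^ j * (m.descFactorial j : ℝ) * (2 * ξ₂) ^ (m - j)) := by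
    intro j hj
    rw [intB j m ξ₂ (by exact Nat.lt_succ_iff.mp (Finset.mem_range.mp hj))]
  rw [Finset.sum_congr rfl step]
  rw [laguerre, Finset.mul_sum]
  rw [← Finset.sum_range_reflect]
  refine Finset.sum_congr rfl fun k hk => ?_
  have hkm : k ≤ m := Nat.lt_succ_iff.mp (Finset.mem_range.mp hk)
  have h1 : m - (m - k) = k := by omega
  simp only [Nat.add_sub_cancel]
  rw [h1, Nat.choose_symm hkm]
  have hdf : (k.factorial : ℝ) * (m.descFactorial (m-k) : ℝ) = (m.factorial : ℝ) := by
    have h2 := Nat.factorial_mul_descFactorial (Nat.sub_le m k)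
    rw [h1] at h2
    exact_mod_cast congrArg (Nat.cast : ℕ → ℝ) h2
  have hp2 : (2:ℝ)^(m-k) * (2:ℝ)^k = 2^m := by
    rw [← pow_add]; congr 1; omega
  have hneg : (-(-2 * ξ₁ * ξ₂)) ^ k = (2*ξ₁*ξ₂)^k := by norm_num
  rw [hneg]
  have hfk : (k.factorial : ℝ) ≠ 0 := by
    exact_mod_cast k.factorial_ne_zero
  field_simp
  linear_combination ((m.choose k : ℝ) * 2^k * ξ₁^k * ξ₂^k)
      * ((m.descFactorial (m-k) : ℝ) * (k.factorial : ℝ)) * hp2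
    + ((m.choose k : ℝ) * 2^k * ξ₁^k * ξ₂^k) * (2:ℝ)^m * hdf
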